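/- arXiv:2108.13903 — 2 statements merged into one kernel-verified Lean document; each statement's English description precedes it below -/
import Mathlib

section
/- Let p(z,w) be a Laurent polynomial with non-negative coefficients and no constant term. For real k > p(1,1), the derivative of the Mahler measure of P = k − p with respect to log k equals u₀(k), where u₀(k) = Σ_{n≥0} k^{-n} · [p(z,w)^n]₀ and [·]₀ denotes the constant term; i.e., d m(P)/d(log k) = u₀(k). -/
open MeasureTheory

/-- Evaluation of a two-variable Laurent polynomial with real coefficients. -/
noncomputable def laurentEval2 (p : AddMonoidAlgebra ℝ (ℤ × ℤ)) (z w : ℂ) : ℂ :=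
  Finsupp.sum p.coeff fun a c => (c : ℂ) * z ^ a.1 * w ^ a.2

/-- The constant term of a two-variable Laurent polynomial. -/
noncomputable def constTerm (p : AddMonoidAlgebra ℝ (ℤ × ℤ)) : ℝ :=
  Finsupp.toFun p.coeff 0

/-- The Mahler measure of a function of two complex variables. -/
noncomputable def mahlerMeasure2 (P : ℂ → ℂ → ℂ) : ℝ :=
  ∫ θ in Set.Ioc (0:ℝ) 1 ×ˢ Set.Ioc (0:ℝ) 1,
    Real.log (‖(P (Complex.exp (2 * Real.pi * Complex.I * (θ.1 : ℂ)))
      (Complex.exp (2 * Real.pi * Complex.I * (θ.2 : ℂ))))‖)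

open Complex

noncomputable def monHom (z w : ℂ) (hz : z ≠ 0) (hw : w ≠ 0) : Multiplicative (ℤ × ℤ) →* ℂ where
  toFun a := z ^ (Multiplicative.toAdd a).1 * w ^ (Multiplicative.toAdd a).2
  map_one' := by simp
  map_mul' a b := by
    simp only [toAdd_mul, Prod.fst_add, Prod.snd_add, zpow_add₀ hz, zpow_add₀ hw]
    ring

theorem laurentEval2_eq_lift (q : AddMonoidAlgebra ℝ (ℤ × ℤ)) (z w : ℂ) (hz : z ≠ 0) (hw : w ≠ 0) :
    laurentEval2 q z w = AddMonoidAlgebra.lift ℝ ℂ (ℤ × ℤ) (monHom z w hz hw) q := by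
  rw [AddMonoidAlgebra.lift_apply]
  refine Finsupp.sum_congr fun a _ => ?_
  simp [monHom, Complex.real_smul, mul_assoc]

theorem laurentEval2_pow (q : AddMonoidAlgebra ℝ (ℤ × ℤ)) (n : ℕ) (z w : ℂ) (hz : z ≠ 0) (hw : w ≠ 0) :
    laurentEval2 (q ^ n) z w = laurentEval2 q z w ^ n := by
  rw [laurentEval2_eq_lift _ _ _ hz hw, laurentEval2_eq_lift _ _ _ hz hw, map_pow]

noncomputable def eC (θ : ℝ) : ℂ := Complex.exp (2*Real.pi*Complex.I*θ)

theorem eC_ne_zero (θ : ℝ) : eC θ ≠ 0 := Complex.exp_ne_zero _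

theorem eC_cont : Continuous eC := by
  unfold eC; fun_prop

theorem abs_eC (θ : ℝ) : ‖eC θ‖ = 1 := by
  unfold eC
  rw [Complex.norm_exp]
  norm_num [Complex.ext_iff]

theorem integral_eC_zpow (a : ℤ) :
    ∫ θ in Set.Ioc (0:ℝ) 1, eC θ ^ a = if a = 0 then 1 else 0 := by
  rw [← intervalIntegral.integral_of_le zero_le_one]
  have key : ∀ θ : ℝ, eC θ ^ a = Complex.exp ((a * (2*Real.pi*Complex.I)) * θ) := by
    intro θ
    rw [eC, ← Complex.exp_int_mul, ← mul_assoc]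
  simp_rw [key]
  split_ifs with h
  · subst h; simp
  · rw [integral_exp_mul_complex (by
      simp [Complex.ext_iff, Real.pi_ne_zero, h, mul_comm])]
    push_cast
    rw [mul_one, mul_zero, Complex.exp_zero, Complex.exp_int_mul_two_pi_mul_I]
    simp

theorem cont_mono (a b : ℤ) : Continuous (fun θ : ℝ × ℝ => eC θ.1 ^ a * eC θ.2 ^ b) := by
  apply Continuous.mul
  · exact (eC_cont.comp continuous_fst).zpow₀ a (fun x => Or.inl (eC_ne_zero _))
  · exact (eC_cont.comp continuous_snd).zpow₀ b (fun x => Or.inl (eC_ne_zero _))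

theorem box_sub : (Set.Ioc (0:ℝ) 1 ×ˢ Set.Ioc (0:ℝ) 1) ⊆ (Set.Icc (0:ℝ) 1 ×ˢ Set.Icc (0:ℝ) 1) :=
  Set.prod_mono Set.Ioc_subset_Icc_self Set.Ioc_subset_Icc_self

theorem integrableOn_of_cont {f : ℝ × ℝ → ℂ} (hf : Continuous f) :
    IntegrableOn f (Set.Ioc (0:ℝ) 1 ×ˢ Set.Ioc (0:ℝ) 1) :=
  (hf.continuousOn.integrableOn_compact (isCompact_Icc.prod isCompact_Icc)).mono_set box_sub

theorem integral_torus_eval (q : AddMonoidAlgebra ℝ (ℤ × ℤ)) :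
    ∫ θ in Set.Ioc (0:ℝ) 1 ×ˢ Set.Ioc (0:ℝ) 1,
      laurentEval2 q (eC θ.1) (eC θ.2) = (constTerm q : ℂ) := by
  have : ∀ θ : ℝ × ℝ, laurentEval2 q (eC θ.1) (eC θ.2)
      = ∑ a ∈ q.coeff.support, (q.coeff a : ℂ) * (eC θ.1 ^ a.1 * eC θ.2 ^ a.2) := by
    intro θ
    rw [laurentEval2, Finsupp.sum]
    exact Finset.sum_congr rfl fun a _ => by ring
  simp_rw [this]
  rw [integral_finset_sum]
  · have term : ∀ a : ℤ × ℤ, ∫ θ in Set.Ioc (0:ℝ) 1 ×ˢ Set.Ioc (0:ℝ) 1,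
        (q.coeff a : ℂ) * (eC θ.1 ^ a.1 * eC θ.2 ^ a.2)
        = if a = 0 then (q.coeff a : ℂ) else 0 := by
      intro a
      rw [integral_const_mul ((q.coeff a : ℂ)) (fun θ : ℝ×ℝ => eC θ.1 ^ a.1 * eC θ.2 ^ a.2)]
      have : ∫ θ in Set.Ioc (0:ℝ) 1 ×ˢ Set.Ioc (0:ℝ) 1, eC θ.1 ^ a.1 * eC θ.2 ^ a.2
          = (∫ θ in Set.Ioc (0:ℝ) 1, eC θ ^ a.1) * ∫ θ in Set.Ioc (0:ℝ) 1, eC θ ^ a.2 := by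
        rw [Measure.volume_eq_prod]
        exact setIntegral_prod_mul (L := ℂ) (fun θ => eC θ ^ a.1) (fun θ => eC θ ^ a.2) _ _
      rw [this, integral_eC_zpow, integral_eC_zpow]
      rcases eq_or_ne a 0 with rfl | h
      · simp
      · rw [if_neg h]
        have h' : a.1 ≠ 0 ∨ a.2 ≠ 0 := by
          by_contra hc; push_neg at hc; exact h (Prod.ext hc.1 hc.2)
        rcases h' with h' | h' <;> simp [h']
    simp_rw [term]
    rw [Finset.sum_ite_eq' q.coeff.support (0 : ℤ×ℤ) (fun a => (q.coeff a : ℂ))]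
    rcases Finset.decidableMem (0:ℤ×ℤ) q.coeff.support with h | h
    · rw [if_neg h]
      have hq : q.coeff 0 = 0 := Finsupp.notMem_support_iff.mp h
      have hc : constTerm q = q.coeff 0 := rfl
      rw [hc, hq]; simp
    · rw [if_pos h]; rfl
  · intro a _
    exact integrableOn_of_cont (continuous_const.mul (cont_mono a.1 a.2))

theorem eval_one_one (p : AddMonoidAlgebra ℝ (ℤ × ℤ)) : laurentEval2 p 1 1 = ((Finsupp.sum p.coeff fun _ c => c : ℝ) : ℂ) := by
  rw [laurentEval2]
  rw [Finsupp.sum, Finsupp.sum, Complex.ofReal_sum]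
  exact Finset.sum_congr rfl fun a _ => by simp

theorem eval_norm_le (p : AddMonoidAlgebra ℝ (ℤ × ℤ)) (hpos : ∀ a, 0 ≤ Finsupp.toFun p.coeff a) (z w : ℂ) (hz : ‖z‖ = 1) (hw : ‖w‖ = 1) :
    ‖laurentEval2 p z w‖ ≤ (laurentEval2 p 1 1).re := by
  rw [eval_one_one, Complex.ofReal_re, laurentEval2, Finsupp.sum]
  calc ‖∑ a ∈ p.coeff.support, (p.coeff a : ℂ) * z ^ a.1 * w ^ a.2‖
      ≤ ∑ a ∈ p.coeff.support, ‖(p.coeff a : ℂ) * z ^ a.1 * w ^ a.2‖ := norm_sum_le _ _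
    _ = ∑ a ∈ p.coeff.support, |p.coeff a| := by
        refine Finset.sum_congr rfl fun a _ => ?_
        rw [norm_mul, norm_mul, norm_zpow, norm_zpow, hz, hw]
        simp
    _ = Finsupp.sum p.coeff fun _ c => c := by
        rw [Finsupp.sum]
        exact Finset.sum_congr rfl fun a _ => abs_of_nonneg (hpos a)

theorem S_nonneg (p : AddMonoidAlgebra ℝ (ℤ × ℤ)) (hpos : ∀ a, 0 ≤ Finsupp.toFun p.coeff a) :
    0 ≤ (laurentEval2 p 1 1).re := by
  rw [eval_one_one, Complex.ofReal_re, Finsupp.sum]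
  exact Finset.sum_nonneg fun a _ => hpos a

theorem volume_box : (volume (Set.Ioc (0:ℝ) 1 ×ˢ Set.Ioc (0:ℝ) 1)).toReal = 1 := by
  rw [Measure.volume_eq_prod, Measure.prod_prod, Real.volume_Ioc]
  norm_num

theorem integrableOn_of_cont' {f : ℝ × ℝ → ℝ} (hf : Continuous f) :
    IntegrableOn f (Set.Ioc (0:ℝ) 1 ×ˢ Set.Ioc (0:ℝ) 1) :=
  (hf.continuousOn.integrableOn_compact (isCompact_Icc.prod isCompact_Icc)).mono_set box_sub

theorem continuous_P (p : AddMonoidAlgebra ℝ (ℤ × ℤ)) :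
    Continuous (fun θ : ℝ × ℝ => laurentEval2 p (eC θ.1) (eC θ.2)) := by
  have : (fun θ : ℝ × ℝ => laurentEval2 p (eC θ.1) (eC θ.2))
      = fun θ => ∑ a ∈ p.coeff.support, (p.coeff a : ℂ) * (eC θ.1 ^ a.1 * eC θ.2 ^ a.2) := by
    funext θ
    rw [laurentEval2, Finsupp.sum]
    exact Finset.sum_congr rfl fun a _ => by ring
  rw [this]
  exact continuous_finset_sum _ fun a _ => continuous_const.mul (cont_mono a.1 a.2)

theorem integral_P_pow (p : AddMonoidAlgebra ℝ (ℤ × ℤ)) (n : ℕ) :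
    ∫ θ in Set.Ioc (0:ℝ) 1 ×ˢ Set.Ioc (0:ℝ) 1,
        (laurentEval2 p (eC θ.1) (eC θ.2)) ^ n = (constTerm (p ^ n) : ℂ) := by
  rw [← integral_torus_eval]
  exact setIntegral_congr_fun (measurableSet_Ioc.prod measurableSet_Ioc)
    fun θ _ => (laurentEval2_pow p n _ _ (eC_ne_zero _) (eC_ne_zero _)).symm

theorem abs_c_le (p : AddMonoidAlgebra ℝ (ℤ × ℤ)) (hpos : ∀ a, 0 ≤ Finsupp.toFun p.coeff a) (n : ℕ) :
    |constTerm (p ^ n)| ≤ (laurentEval2 p 1 1).re ^ n := by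
  set S := (laurentEval2 p 1 1).re
  have key := (integral_P_pow p n).symm
  have h1 : |constTerm (p ^ n)| = ‖((constTerm (p ^ n) : ℂ))‖ := by
    rw [Complex.norm_real, Real.norm_eq_abs]
  rw [h1, key]
  calc ‖∫ θ in Set.Ioc (0:ℝ) 1 ×ˢ Set.Ioc (0:ℝ) 1, (laurentEval2 p (eC θ.1) (eC θ.2)) ^ n‖
      ≤ S ^ n * (volume (Set.Ioc (0:ℝ) 1 ×ˢ Set.Ioc (0:ℝ) 1)).toReal := by
        apply norm_setIntegral_le_of_norm_le_const
        · rw [Measure.volume_eq_prod, Measure.prod_prod, Real.volume_Ioc]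
          norm_num
        · intro θ _
          rw [norm_pow]
          exact pow_le_pow_left₀ (norm_nonneg _) (eval_norm_le p hpos _ _ (abs_eC _) (abs_eC _)) n
    _ = S ^ n := by rw [volume_box, mul_one]

theorem mahler_eq (p : AddMonoidAlgebra ℝ (ℤ × ℤ)) (hpos : ∀ a, 0 ≤ Finsupp.toFun p.coeff a)
    (L : ℝ) (hL : (laurentEval2 p 1 1).re < Real.exp L) :
    mahlerMeasure2 (fun z w => (Real.exp L : ℂ) - laurentEval2 p z w)
      = L - ∑' n : ℕ, constTerm (p ^ n) * Real.exp (-(n * L)) / n := by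
  have hS0 : 0 ≤ (laurentEval2 p 1 1).re := S_nonneg p hpos
  set S := (laurentEval2 p 1 1).re with hSdef
  have heL : (0:ℝ) < Real.exp L := Real.exp_pos L
  set box := Set.Ioc (0:ℝ) 1 ×ˢ Set.Ioc (0:ℝ) 1 with hboxdef
  have hboxm : MeasurableSet box := measurableSet_Ioc.prod measurableSet_Ioc
  haveI : IsFiniteMeasure (volume.restrict box) := by
    constructor
    rw [Measure.restrict_apply_univ, hboxdef, Measure.volume_eq_prod, Measure.prod_prod,
      Real.volume_Ioc]
    simp
  set P : ℝ × ℝ → ℂ := fun θ => laurentEval2 p (eC θ.1) (eC θ.2) with hPdef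
  have hPc : Continuous P := continuous_P p
  have hPb : ∀ θ, ‖P θ‖ ≤ S := fun θ => eval_norm_le p hpos _ _ (abs_eC _) (abs_eC _)
  set ρ : ℝ := S / Real.exp L with hρdef
  have hρ0 : 0 ≤ ρ := div_nonneg hS0 heL.le
  have hρ1 : ρ < 1 := (div_lt_one heL).mpr hL
  set u : ℝ × ℝ → ℂ := fun θ => (Real.exp (-L) : ℂ) * P θ with hudef
  have huc : Continuous u := continuous_const.mul hPc
  have hub : ∀ θ, ‖u θ‖ ≤ ρ := by
    intro θ
    have hn : ‖u θ‖ = Real.exp (-L) * ‖P θ‖ := by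
      rw [hudef]
      rw [norm_mul, Complex.norm_real, Real.norm_eq_abs, abs_of_pos (Real.exp_pos _)]
    rw [hn, Real.exp_neg, hρdef, div_eq_inv_mul]
    exact mul_le_mul_of_nonneg_left (hPb θ) (inv_nonneg.mpr heL.le)
  have hub1 : ∀ θ, ‖u θ‖ < 1 := fun θ => lt_of_le_of_lt (hub θ) hρ1
  have h1u : ∀ θ, (1 : ℂ) - u θ ≠ 0 := by
    intro θ hc
    have h1 : (1:ℂ) = u θ := by linear_combination hc
    have := hub1 θ
    rw [← h1] at this; simp at this
  have hfact : ∀ θ, ((Real.exp L : ℂ)) - P θ = (Real.exp L : ℂ) * (1 - u θ) := by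
    intro θ
    have hmul : (Real.exp L : ℂ) * (Real.exp (-L) : ℂ) = 1 := by
      rw [← Complex.ofReal_mul, ← Real.exp_add]; simp
    rw [hudef, mul_sub, mul_one, ← mul_assoc, hmul, one_mul]
  have hlog : ∀ θ, Real.log (‖(Real.exp L : ℂ) - P θ‖)
      = L + Real.log (‖1 - u θ‖) := by
    intro θ
    rw [hfact θ, norm_mul, Real.log_mul, Complex.norm_real, Real.norm_eq_abs, abs_of_pos heL, Real.log_exp]
    · rw [Complex.norm_real, Real.norm_eq_abs, abs_of_pos heL]; exact ne_of_gt heL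
    · exact norm_ne_zero_iff.mpr (h1u θ)
  -- summation of the Taylor series pointwise
  set F : ℕ → ℝ × ℝ → ℝ := fun n θ => -((u θ) ^ n / n).re with hFdef
  have hsum : ∀ θ, HasSum (fun n : ℕ => F n θ) (Real.log (‖1 - u θ‖)) := by
    intro θ
    have h := (Complex.hasSum_taylorSeries_neg_log (hub1 θ)).mapL Complex.reCLM
    have h2 := h.neg
    simp only [Complex.reCLM_apply, Complex.neg_re, Complex.log_re, neg_neg] at h2
    exact h2
  -- integrability and bounds
  have hFc : ∀ n, Continuous (F n) := by
    intro n
    exact (Complex.continuous_re.comp ((huc.pow n).div_const _)).neg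
  have hFint : ∀ n, Integrable (F n) (volume.restrict box) := fun n => integrableOn_of_cont' (hFc n)
  have hFb : ∀ n θ, ‖F n θ‖ ≤ ρ ^ n := by
    intro n θ
    rw [Real.norm_eq_abs, hFdef, abs_neg]
    refine le_trans (Complex.abs_re_le_norm _) ?_
    rw [norm_div, norm_pow]
    rcases n with _ | n
    · simp
    · have h1 : ‖u θ‖ ^ (n+1) / ‖((n+1 : ℕ) : ℂ)‖ ≤ ‖u θ‖ ^ (n+1) := by
        apply div_le_self (pow_nonneg (norm_nonneg _) _)
        rw [Complex.norm_natCast]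
        exact_mod_cast Nat.one_le_iff_ne_zero.mpr (Nat.succ_ne_zero n)
      exact h1.trans (pow_le_pow_left₀ (norm_nonneg _) (hub θ) _)
  have hFnormint : Summable (fun n => ∫ θ in box, ‖F n θ‖) := by
    refine Summable.of_nonneg_of_le (fun n => integral_nonneg fun θ => norm_nonneg _)
      (fun n => ?_) (summable_geometric_of_lt_one hρ0 hρ1)
    calc ∫ θ in box, ‖F n θ‖ ≤ ∫ _θ in box, ρ ^ n := by
          refine setIntegral_mono_on (hFint n).norm
            ((integrableOn_const_iff).mpr (Or.inr ?_)) hboxm (fun θ _ => hFb n θ)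
          rw [hboxdef, Measure.volume_eq_prod, Measure.prod_prod, Real.volume_Ioc]
          norm_num
      _ = ρ ^ n := by rw [setIntegral_const, measureReal_def, volume_box, one_smul]
  have hHasSum := hasSum_integral_of_summable_integral_norm hFint hFnormint
  -- value of each integral
  have hFn : ∀ n : ℕ, ∫ θ in box, F n θ = -(constTerm (p ^ n) * Real.exp (-(n * L)) / n) := by
    intro n
    have hI : Integrable (fun θ => (u θ) ^ n / (n:ℂ)) (volume.restrict box) :=
      integrableOn_of_cont ((huc.pow n).div_const _)
    have e1 : ∫ θ in box, F n θ = -(∫ θ in box, (u θ) ^ n / (n:ℂ)).re := by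
      rw [hFdef, integral_neg]
      congr 1
      have h := ContinuousLinearMap.integral_comp_comm Complex.reCLM hI
      simpa using h
    rw [e1]
    have e2 : ∫ θ in box, (u θ) ^ n / (n:ℂ)
        = ((Real.exp (-L) : ℂ)) ^ n * (constTerm (p ^ n) : ℂ) / (n:ℂ) := by
      have : (fun θ : ℝ × ℝ => (u θ) ^ n / (n:ℂ))
          = fun θ => (((Real.exp (-L) : ℂ)) ^ n / (n:ℂ)) * (P θ) ^ n := by
        funext θ; rw [hudef]; ring
      rw [this, integral_const_mul, hPdef, integral_P_pow]
      ring
    rw [e2]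
    have e3 : ((Real.exp (-L) : ℂ)) ^ n * (constTerm (p ^ n) : ℂ) / (n:ℂ)
        = ((Real.exp (-L) ^ n * constTerm (p ^ n) / n : ℝ) : ℂ) := by
      push_cast; ring
    rw [e3, Complex.ofReal_re]
    rw [← Real.exp_nat_mul]
    ring_nf
  -- continuity and integrability of the full integrand
  have hne : ∀ θ, (Real.exp L : ℂ) - P θ ≠ 0 := by
    intro θ
    rw [hfact θ]
    exact mul_ne_zero (by exact_mod_cast ne_of_gt heL) (h1u θ)
  have hfc : Continuous (fun θ : ℝ × ℝ => Real.log (‖(Real.exp L : ℂ) - P θ‖)) := by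
    have h1 : Continuous fun θ : ℝ × ℝ => ‖(Real.exp L : ℂ) - P θ‖ :=
      continuous_norm.comp (continuous_const.sub hPc)
    exact h1.log fun θ => norm_ne_zero_iff.mpr (hne θ)
  have hfi : Integrable (fun θ : ℝ × ℝ => Real.log (‖(Real.exp L : ℂ) - P θ‖))
      (volume.restrict box) := integrableOn_of_cont' hfc
  have hgptw : ∀ θ : ℝ × ℝ, Real.log (‖(Real.exp L : ℂ) - P θ‖)
      = L + ∑' n, F n θ := by
    intro θ
    rw [hlog θ, (hsum θ).tsum_eq]
  have hgi : Integrable (fun θ : ℝ × ℝ => ∑' n, F n θ) (volume.restrict box) := by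
    have : (fun θ : ℝ × ℝ => ∑' n, F n θ)
        = fun θ => Real.log (‖(Real.exp L : ℂ) - P θ‖) - L := by
      funext θ; rw [hgptw θ]; ring
    rw [this]
    exact hfi.sub (integrable_const L)
  -- assemble
  have unfol : mahlerMeasure2 (fun z w => (Real.exp L : ℂ) - laurentEval2 p z w)
      = ∫ θ in box, Real.log (‖(Real.exp L : ℂ) - P θ‖) := rfl
  rw [unfol]
  calc ∫ θ in box, Real.log (‖(Real.exp L : ℂ) - P θ‖)
      = ∫ θ in box, (L + ∑' n, F n θ) := by
        exact setIntegral_congr_fun hboxm fun θ _ => hgptw θ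
    _ = (∫ _θ in box, L) + ∫ θ in box, ∑' n, F n θ := integral_add (integrable_const L) hgi
    _ = L + ∑' n, ∫ θ in box, F n θ := by
        rw [setIntegral_const, measureReal_def, volume_box, one_smul, hHasSum.tsum_eq]
    _ = L - ∑' n : ℕ, constTerm (p ^ n) * Real.exp (-(n * L)) / n := by
        rw [sub_eq_add_neg, ← tsum_neg]
        congr 1
        exact tsum_congr fun n => by rw [hFn n]

theorem constTerm_one : constTerm (1 : AddMonoidAlgebra ℝ (ℤ × ℤ)) = 1 := by
  show (1 : AddMonoidAlgebra ℝ (ℤ × ℤ)).coeff 0 = 1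
  rw [AddMonoidAlgebra.one_def]; simp

/-- For `p` with non-negative coefficients and no constant term and real
`k > p(1,1)`, the derivative of `m(k − p)` with respect to `log k` is
`u₀(k) = Σ_{n≥0} k^{-n} [pⁿ]₀`. -/
theorem mahler_flow_equation (p : AddMonoidAlgebra ℝ (ℤ × ℤ))
    (hpos : ∀ a, 0 ≤ Finsupp.toFun p.coeff a) (hconst : constTerm p = 0) (k : ℝ)
    (hk : (laurentEval2 p 1 1).re < k) :
    HasDerivAt
      (fun L : ℝ => mahlerMeasure2 (fun z w => (Real.exp L : ℂ) - laurentEval2 p z w))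
      (∑' n : ℕ, constTerm (p ^ n) / k ^ n) (Real.log k) := by
  have hS0 : 0 ≤ (laurentEval2 p 1 1).re := S_nonneg p hpos
  set S := (laurentEval2 p 1 1).re with hSdef
  have hk0 : 0 < k := lt_of_le_of_lt hS0 hk
  set r : ℝ := (S + k) / 2 with hrdef
  have hSr : S < r := by rw [hrdef]; linarith
  have hrk : r < k := by rw [hrdef]; linarith
  have hr0 : 0 < r := lt_of_le_of_lt hS0 hSr
  set c : ℕ → ℝ := fun n => constTerm (p ^ n) with hcdef
  have hc : ∀ n, |c n| ≤ S ^ n := abs_c_le p hpos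
  set t : Set ℝ := {L | r < Real.exp L} with htdef
  have ht_open : IsOpen t := isOpen_lt continuous_const Real.continuous_exp
  have ht_eq : t = Set.Ioi (Real.log r) := by
    ext L
    simp only [htdef, Set.mem_setOf_eq, Set.mem_Ioi]
    constructor
    · intro h
      have := Real.exp_log hr0
      have h2 := Real.log_lt_log hr0 h
      rwa [Real.log_exp] at h2
    · intro h
      calc r = Real.exp (Real.log r) := (Real.exp_log hr0).symm
        _ < Real.exp L := Real.exp_lt_exp.mpr h
  have ht_conn : IsPreconnected t := by rw [ht_eq]; exact isPreconnected_Ioi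
  have hkt : Real.log k ∈ t := by
    simp only [htdef, Set.mem_setOf_eq]
    rw [Real.exp_log hk0]; exact hrk
  set g : ℕ → ℝ → ℝ := fun n L => c n * Real.exp (-(n * L)) / n with hgdef
  set g' : ℕ → ℝ → ℝ := fun n L => if n = 0 then 0 else -(c n * Real.exp (-(n * L))) with hg'def
  have hgderiv : ∀ (n : ℕ) (L : ℝ), HasDerivAt (g n) (g' n L) L := by
    intro n L
    rcases n with _ | m
    · have h0 : HasDerivAt (fun _ : ℝ => (0:ℝ)) 0 L := hasDerivAt_const L 0
      have hev : (g 0) =ᶠ[nhds L] (fun _ : ℝ => (0:ℝ)) :=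
        Filter.Eventually.of_forall fun x => by simp [hgdef]
      have := h0.congr_of_eventuallyEq hev
      simpa [hg'def] using this
    · have h1 : HasDerivAt (fun L : ℝ => -(((m+1:ℕ) : ℝ) * L)) (-((m+1:ℕ) : ℝ)) L := by
        exact ((hasDerivAt_id L).const_mul (((m+1:ℕ) : ℝ))).neg.congr_deriv (by simp)
      have h2 := h1.exp
      have h3 := (h2.const_mul (c (m+1))).div_const (((m+1:ℕ) : ℝ))
      have hne : (((m+1:ℕ) : ℝ)) ≠ 0 := by positivity
      convert h3 using 1
      · rfl
      · rfl
      simp only [hg'def, if_neg (Nat.succ_ne_zero m)]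
      push_cast
      field_simp
  have hexp_bound : ∀ (n : ℕ) (L : ℝ), L ∈ t → Real.exp (-(n * L)) ≤ (r ^ n)⁻¹ := by
    intro n L hL
    rw [Real.exp_neg, Real.exp_nat_mul]
    apply inv_anti₀ (pow_pos hr0 n)
    exact pow_le_pow_left₀ hr0.le (le_of_lt hL) n
  have hbound_main : ∀ (n : ℕ) (L : ℝ), L ∈ t → |c n * Real.exp (-(n * L))| ≤ (S / r) ^ n := by
    intro n L hL
    rw [abs_mul, abs_of_pos (Real.exp_pos _), div_pow, div_eq_mul_inv]
    exact mul_le_mul (hc n) (hexp_bound n L hL) (Real.exp_pos _).le (pow_nonneg hS0 n)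
  have hg'bound : ∀ (n : ℕ) (L : ℝ), L ∈ t → ‖g' n L‖ ≤ (S / r) ^ n := by
    intro n L hL
    rcases n with _ | m
    · simp [hg'def]
    · simp only [hg'def, if_neg (Nat.succ_ne_zero m), Real.norm_eq_abs, abs_neg]
      exact hbound_main (m+1) L hL
  have hgbound : ∀ (n : ℕ) (L : ℝ), L ∈ t → ‖g n L‖ ≤ (S / r) ^ n := by
    intro n L hL
    rcases n with _ | m
    · simp [hgdef]
    · simp only [hgdef, Real.norm_eq_abs, abs_div]
      refine le_trans (div_le_self (abs_nonneg _) ?_) (hbound_main (m+1) L hL)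
      rw [Nat.abs_cast]
      exact_mod_cast Nat.one_le_iff_ne_zero.mpr (Nat.succ_ne_zero m)
  have hSrlt : S / r < 1 := (div_lt_one hr0).mpr hSr
  have hSr0 : 0 ≤ S / r := div_nonneg hS0 hr0.le
  have hu_sum : Summable (fun n : ℕ => (S / r) ^ n) := summable_geometric_of_lt_one hSr0 hSrlt
  have hg0sum : Summable (fun n => g n (Real.log k)) :=
    Summable.of_norm_bounded hu_sum (fun n => hgbound n _ hkt)
  have hderiv_tsum : HasDerivAt (fun L => ∑' n, g n L) (∑' n, g' n (Real.log k)) (Real.log k) :=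
    hasDerivAt_tsum_of_isPreconnected hu_sum ht_open ht_conn
      (fun n y _ => hgderiv n y) (fun n y hy => hg'bound n y hy) hkt hg0sum hkt
  have hF : HasDerivAt (fun L : ℝ => L - ∑' n, g n L)
      (1 - ∑' n, g' n (Real.log k)) (Real.log k) := (hasDerivAt_id _).sub hderiv_tsum
  -- identify the derivative value
  have hck : ∀ n : ℕ, Real.exp (-(n * Real.log k)) = (k ^ n)⁻¹ := by
    intro n
    rw [Real.exp_neg, Real.exp_nat_mul, Real.exp_log hk0]
  have htarget_sum : Summable (fun n : ℕ => c n / k ^ n) := by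
    apply Summable.of_norm_bounded
      (summable_geometric_of_lt_one (div_nonneg hS0 hk0.le) ((div_lt_one hk0).mpr hk))
    intro n
    rw [Real.norm_eq_abs, abs_div, abs_of_pos (pow_pos hk0 n), div_pow]
    gcongr
    exact hc n
  have hc0 : c 0 = 1 := by rw [hcdef]; simp only [pow_zero]; exact constTerm_one
  have hval : 1 - ∑' n, g' n (Real.log k) = ∑' n : ℕ, c n / k ^ n := by
    have e1 : ∀ n : ℕ, g' n (Real.log k) = if n = 0 then 0 else -(c n / k ^ n) := by
      intro n
      rcases n with _ | m
      · simp [hg'def]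
      · simp only [hg'def, if_neg (Nat.succ_ne_zero m), hck, div_eq_mul_inv]
    set h : ℕ → ℝ := fun n => c n / k ^ n with hhdef
    have hsum_sh : Summable (fun n : ℕ => h (n + 1)) := (summable_nat_add_iff 1).mpr htarget_sum
    have hGsum : Summable (fun n : ℕ => g' n (Real.log k)) := by
      apply (summable_nat_add_iff 1).mp
      apply Summable.congr hsum_sh.neg
      intro n
      rw [e1 (n+1), if_neg (Nat.succ_ne_zero n)]
    rw [Summable.tsum_eq_zero_add hGsum, Summable.tsum_eq_zero_add htarget_sum]
    rw [e1 0, if_pos rfl]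
    have e2 : ∀ n : ℕ, g' (n + 1) (Real.log k) = -(h (n + 1)) := by
      intro n; rw [e1 (n+1), if_neg (Nat.succ_ne_zero n)]
    rw [tsum_congr e2, tsum_neg]
    have hh0 : h 0 = 1 := by rw [hhdef]; simp [hc0]
    rw [hh0]
    ring
  have hev : (fun L : ℝ => mahlerMeasure2 (fun z w => (Real.exp L : ℂ) - laurentEval2 p z w))
      =ᶠ[nhds (Real.log k)] (fun L : ℝ => L - ∑' n, g n L) := by
    have hmem : {L : ℝ | S < Real.exp L} ∈ nhds (Real.log k) := by
      apply (isOpen_lt continuous_const Real.continuous_exp).mem_nhds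
      simp only [Set.mem_setOf_eq]
      rw [Real.exp_log hk0]; exact hk
    filter_upwards [hmem] with L hL
    exact mahler_eq p hpos L hL
  have hfinal := hF.congr_of_eventuallyEq hev
  rw [hval] at hfinal
  exact hfinal
end

section
/- The constant term of (z + z⁻¹ + w + w⁻¹)^{2n} as a Laurent polynomial equals Σ_{i=0}^{n} C(2n,2i)·C(2i,i)·C(2n−2i,n−i), and the constant term of (z + z⁻¹ + w + w⁻¹)^{2n−1} is zero. -/
open Finset

/-- The Laurent polynomial `z + z⁻¹ + w + w⁻¹`, as an element of the group
algebra `ℤ[ℤ × ℤ]`. -/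
noncomputable def fourTerm : AddMonoidAlgebra ℤ (ℤ × ℤ) :=
  AddMonoidAlgebra.single (1, 0) 1 + AddMonoidAlgebra.single (-1, 0) 1 +
    AddMonoidAlgebra.single (0, 1) 1 + AddMonoidAlgebra.single (0, -1) 1

noncomputable abbrev S (a b : ℤ) : AddMonoidAlgebra ℤ (ℤ × ℤ) := AddMonoidAlgebra.single (a, b) 1

theorem expand2 (a b : ℤ) (k : ℕ) : (S a b + S (-a) (-b)) ^ k
    = ∑ j ∈ range (k+1), AddMonoidAlgebra.single ((2*j - k : ℤ) * a, (2*j - k : ℤ) * b) ((k.choose j : ℤ)) := by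
  rw [add_pow]
  refine Finset.sum_congr rfl fun j hj => ?_
  have hjk : j ≤ k := Nat.lt_succ_iff.mp (mem_range.mp hj)
  rw [AddMonoidAlgebra.single_pow, AddMonoidAlgebra.single_pow, AddMonoidAlgebra.natCast_def,
    AddMonoidAlgebra.single_mul_single, AddMonoidAlgebra.single_mul_single]
  simp only [Prod.smul_def, smul_eq_mul, nsmul_eq_mul, Nat.cast_sub hjk, one_pow, one_mul,
    Prod.mk_add_mk, add_zero, mul_one]
  congr 2 <;> ring

theorem toFun_sum {ι : Type*} (s : Finset ι) (g : ι → AddMonoidAlgebra ℤ (ℤ × ℤ)) (x : ℤ × ℤ) :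
    Finsupp.toFun (∑ i ∈ s, g i).coeff x = ∑ i ∈ s, Finsupp.toFun (g i).coeff x := by
  rw [AddMonoidAlgebra.coeff_sum]
  exact map_sum (Finsupp.applyAddHom x) (fun i => (g i).coeff) s

theorem toFun_single (p : ℤ × ℤ) (c : ℤ) (x : ℤ × ℤ) :
    Finsupp.toFun (AddMonoidAlgebra.single p c).coeff x = if p = x then c else 0 :=
  Finsupp.single_apply

theorem sumIte (k : ℕ) :
    (∑ j ∈ range (k+1), if (2*(j:ℤ) - k = 0) then (k.choose j : ℤ) else 0)
      = if k % 2 = 0 then (k.choose (k/2) : ℤ) else 0 := by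
  rcases Nat.even_or_odd k with ⟨i, hi⟩ | ⟨i, hi⟩
  · subst hi
    rw [if_pos (by omega)]
    rw [Finset.sum_eq_single i (fun j _ hji => by rw [if_neg (by push_cast; omega)])
      (fun h => absurd (mem_range.mpr (by omega)) h)]
    rw [if_pos (by push_cast; omega)]
    have h2 : (i+i)/2 = i := by omega
    rw [h2]
  · subst hi
    rw [if_neg (by omega)]
    exact Finset.sum_eq_zero fun j _ => by rw [if_neg (by push_cast; omega)]

noncomputable def eA (k : ℕ) : ℤ := if k % 2 = 0 then (k.choose (k/2) : ℤ) else 0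

theorem main (m : ℕ) : Finsupp.toFun (fourTerm ^ m).coeff 0 =
    ∑ k ∈ range (m+1), eA k * eA (m - k) * (m.choose k : ℤ) := by
  have hf : fourTerm = (S 1 0 + S (-1) (-0)) + (S (-0) 1 + S (-(-0)) (-1)) := by
    unfold fourTerm
    norm_num [add_assoc]
  rw [hf, add_pow, toFun_sum]
  refine Finset.sum_congr rfl fun k hk => ?_
  rw [expand2 1 0, expand2 (-0) 1, Finset.sum_mul_sum, AddMonoidAlgebra.natCast_def]
  rw [Finset.sum_mul]
  simp only [Finset.sum_mul, AddMonoidAlgebra.single_mul_single, mul_one, mul_zero, neg_zero,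
    add_zero, zero_add, Prod.mk_add_mk, one_mul]
  rw [toFun_sum]
  refine (Finset.sum_congr rfl fun i _ => by rw [toFun_sum]).trans ?_
  simp only [toFun_single, Prod.mk.injEq, Prod.mk_eq_zero]
  have step : ∀ i ∈ range (k+1), ∀ j ∈ range (m - k + 1),
      (if (2*(i:ℤ) - k = 0 ∧ 2*(j:ℤ) - (m - k : ℕ) = 0) then
        ((k.choose i : ℤ) * ((m - k).choose j : ℤ) * (m.choose k : ℤ)) else 0)
      = (if (2*(i:ℤ) - k = 0) then (k.choose i : ℤ) else 0) *
        (if (2*(j:ℤ) - (m - k : ℕ) = 0) then ((m - k).choose j : ℤ) else 0) * (m.choose k : ℤ) := by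
    intro i _ j _
    by_cases h1 : 2*(i:ℤ) - k = 0 <;> by_cases h2 : 2*(j:ℤ) - (m - k : ℕ) = 0 <;>
      simp [h1, h2]
  rw [Finset.sum_congr rfl fun i hi => Finset.sum_congr rfl fun j hj => step i hi j hj]
  simp only [← Finset.sum_mul]
  rw [← Finset.sum_mul_sum, sumIte, sumIte]
  rfl

/-- The constant term of `(z + z⁻¹ + w + w⁻¹)^{2n}` equals
`Σ_{i=0}^{n} C(2n,2i)·C(2i,i)·C(2n−2i,n−i)`, and the constant term of odd
powers vanishes. -/
theorem fourTerm_constant_term (n : ℕ) :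
    Finsupp.toFun (fourTerm ^ (2 * n)).coeff 0 =
      ∑ i ∈ range (n + 1),
        ((2 * n).choose (2 * i) * (2 * i).choose i *
          (2 * n - 2 * i).choose (n - i) : ℤ) ∧
    Finsupp.toFun (fourTerm ^ (2 * n + 1)).coeff 0 = 0 := by
  constructor
  · rw [main]
    have hsub : (range (n+1)).image (fun i => 2*i) ⊆ range (2*n+1) := by
      intro k hk
      simp only [mem_image, mem_range] at *
      obtain ⟨i, hi, rfl⟩ := hk
      omega
    have key : ∀ k ∈ range (2*n+1), k ∉ (range (n+1)).image (fun i => 2*i) →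
        eA k * eA (2*n - k) * ((2*n).choose k : ℤ) = 0 := by
      intro k hk hnk
      simp only [mem_range] at hk
      simp only [mem_image, mem_range] at hnk
      push_neg at hnk
      have hodd : k % 2 = 1 := by
        rcases Nat.even_or_odd k with ⟨i, hi⟩ | ⟨i, hi⟩
        · exact absurd (by omega : 2 * i = k) (hnk i (by omega))
        · omega
      simp [eA, hodd]
    rw [← Finset.sum_subset hsub key,
      Finset.sum_image (by intro a _ b _ h; simp only at h; omega)]
    refine Finset.sum_congr rfl fun i hi => ?_
    have hi' : i ≤ n := by simpa [Nat.lt_succ_iff] using hi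
    simp only [eA]
    rw [if_pos (by omega), if_pos (by omega),
      show (2*i)/2 = i by omega, show (2*n - 2*i)/2 = n - i by omega]
    ring
  · rw [main]
    refine Finset.sum_eq_zero fun k hk => ?_
    simp only [mem_range] at hk
    simp only [eA]
    split_ifs with h1 h2
    · exact absurd h2 (by omega)
    · ring
    · ring
    · ring
end
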